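/- For every real k > 1 and every δ > 0 there exists a constant c > 0, depending only on k and δ, such that for all real numbers y₁, y₂ with 1 ≤ y₁ < y₂ satisfying log(y₂/y₁) ≤ 2·log(1 + √(2δ/y₁)), one has (2 sinh((1/2)·log(y₂/y₁)))^k ≤ c · ∫_{y₁}^{y₂} y^{−(k+1)/2} dy. -/

import Mathlib

open Real

theorem excursion_pow_le_integral (k δ : ℝ) (hk : 1 < k) (hδ : 0 < δ) :
    ∃ c : ℝ, 0 < c ∧ ∀ y₁ y₂ : ℝ, 1 ≤ y₁ → y₁ < y₂ →
      Real.log (y₂ / y₁) ≤ 2 * Real.log (1 + Real.sqrt (2 * δ / y₁)) →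
      (2 * Real.sinh ((1 / 2) * Real.log (y₂ / y₁))) ^ k ≤
        c * ∫ y in y₁..y₂, y ^ (-(k + 1) / 2) := by
  set C₀ : ℝ := 2 * Real.sqrt (2 * δ) + 2 * δ with hC₀
  set T : ℝ := (1 + Real.sqrt (2 * δ)) ^ 2 with hT
  have hC₀pos : 0 < C₀ := by positivity
  have hTpos : 0 < T := by positivity
  refine ⟨C₀ ^ (k - 1) * T ^ ((k + 1) / 2), by positivity, ?_⟩
  intro y₁ y₂ hy₁ hy hlog
  have hy₁0 : (0:ℝ) < y₁ := by linarith
  have hy₂0 : (0:ℝ) < y₂ := by linarith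
  set t : ℝ := y₂ / y₁ with htdef
  have ht1 : 1 < t := (one_lt_div hy₁0).mpr hy
  have ht0 : 0 < t := by linarith
  have hsy1 : 1 ≤ Real.sqrt y₁ := Real.one_le_sqrt.mpr hy₁
  have hsy0 : 0 < Real.sqrt y₁ := by linarith
  have hsyle : Real.sqrt y₁ ≤ y₁ := by
    nlinarith [Real.mul_self_sqrt hy₁0.le]
  -- Step A: sinh formula
  have hsinh : 2 * Real.sinh ((1 / 2) * Real.log t) = (t - 1) / Real.sqrt t := by
    rw [Real.sinh_eq]
    have h1 : Real.exp ((1 / 2) * Real.log t) = Real.sqrt t := by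
      rw [Real.sqrt_eq_rpow, Real.rpow_def_of_pos ht0]; ring_nf
    have hst0 : 0 < Real.sqrt t := Real.sqrt_pos.mpr ht0
    rw [Real.exp_neg, h1]
    field_simp
    nlinarith [Real.mul_self_sqrt ht0.le]
  -- bound on t
  set s : ℝ := Real.sqrt (2 * δ / y₁) with hs
  have hs_eq : s = Real.sqrt (2 * δ) / Real.sqrt y₁ := Real.sqrt_div (by positivity) _
  have hs0 : 0 ≤ s := Real.sqrt_nonneg _
  have htb : t ≤ (1 + s) ^ 2 := by
    have h2 : Real.log t ≤ Real.log ((1 + s) ^ 2) := by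
      rw [Real.log_pow]; push_cast; linarith [hlog]
    calc t = Real.exp (Real.log t) := (Real.exp_log ht0).symm
      _ ≤ Real.exp (Real.log ((1 + s) ^ 2)) := Real.exp_le_exp.mpr h2
      _ = (1 + s) ^ 2 := Real.exp_log (by positivity)
  have hsqs : s ^ 2 = 2 * δ / y₁ := Real.sq_sqrt (by positivity)
  -- Step D: t - 1 ≤ C₀ / √y₁
  have hD : t - 1 ≤ C₀ / Real.sqrt y₁ := by
    have h1 : t - 1 ≤ 2 * s + s ^ 2 := by nlinarith
    have h2 : 2 * s = 2 * Real.sqrt (2 * δ) / Real.sqrt y₁ := by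
      rw [hs_eq]; ring
    have h3 : s ^ 2 ≤ 2 * δ / Real.sqrt y₁ := by
      rw [hsqs]
      apply div_le_div_of_nonneg_left (by positivity) hsy0 hsyle
    rw [hC₀]
    rw [h2] at h1
    calc t - 1 ≤ 2 * Real.sqrt (2 * δ) / Real.sqrt y₁ + s ^ 2 := h1
      _ ≤ 2 * Real.sqrt (2 * δ) / Real.sqrt y₁ + 2 * δ / Real.sqrt y₁ := by linarith
      _ = (2 * Real.sqrt (2 * δ) + 2 * δ) / Real.sqrt y₁ := by ring
  -- t ≤ T
  have htT : t ≤ T := by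
    have : s ≤ Real.sqrt (2 * δ) := by
      rw [hs_eq]
      exact div_le_self (Real.sqrt_nonneg _) hsy1
    calc t ≤ (1 + s) ^ 2 := htb
      _ ≤ T := by rw [hT]; nlinarith [Real.sqrt_nonneg (2 * δ)]
  -- LHS bound
  have hLHS1 : (2 * Real.sinh ((1 / 2) * Real.log t)) ^ k ≤ (t - 1) ^ k := by
    rw [hsinh]
    have h1 : (t - 1) / Real.sqrt t ≤ t - 1 :=
      div_le_self (by linarith) (Real.one_le_sqrt.mpr ht1.le)
    exact Real.rpow_le_rpow (div_nonneg (by linarith) (Real.sqrt_nonneg _)) h1 (by linarith)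
  have ht1' : (0:ℝ) < t - 1 := by linarith
  have hLHS2 : (t - 1) ^ k ≤ C₀ ^ (k - 1) * y₁ ^ ((1 - k) / 2) * (t - 1) := by
    have e1 : (t - 1) ^ k = (t - 1) ^ (k - 1) * (t - 1) := by
      rw [← Real.rpow_add_one ht1'.ne']; ring_nf
    have e2 : (t - 1) ^ (k - 1) ≤ (C₀ / Real.sqrt y₁) ^ (k - 1) :=
      Real.rpow_le_rpow ht1'.le hD (by linarith)
    have e3 : (C₀ / Real.sqrt y₁) ^ (k - 1) = C₀ ^ (k - 1) * y₁ ^ ((1 - k) / 2) := by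
      rw [Real.div_rpow hC₀pos.le (Real.sqrt_nonneg _), Real.sqrt_eq_rpow,
        ← Real.rpow_mul hy₁0.le, div_eq_mul_inv, ← Real.rpow_neg hy₁0.le]
      congr 1
      ring_nf
    rw [e1]
    have := mul_le_mul_of_nonneg_right (e2.trans_eq e3) ht1'.le
    linarith [this]
  -- integral lower bound
  set r : ℝ := -(k + 1) / 2 with hr
  have hy₂eq : y₂ = t * y₁ := by rw [htdef, div_mul_cancel₀ y₂ hy₁0.ne']
  have hy₂T : y₂ ≤ T * y₁ := by
    rw [hy₂eq]; exact mul_le_mul_of_nonneg_right htT hy₁0.le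
  have hcont : ContinuousOn (fun y : ℝ => y ^ r) (Set.uIcc y₁ y₂) := by
    apply ContinuousOn.rpow_const continuousOn_id
    intro x hx
    left
    rw [Set.uIcc_of_le hy.le] at hx
    exact ne_of_gt (lt_of_lt_of_le hy₁0 hx.1)
  have hint : IntervalIntegrable (fun y : ℝ => y ^ r) MeasureTheory.volume y₁ y₂ :=
    hcont.intervalIntegrable
  have hlow : (y₂ - y₁) * (T * y₁) ^ r ≤ ∫ y in y₁..y₂, y ^ r := by
    have h1 : ∀ x ∈ Set.Icc y₁ y₂, (T * y₁) ^ r ≤ x ^ r := by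
      intro x hx
      exact Real.rpow_le_rpow_of_nonpos (lt_of_lt_of_le hy₁0 hx.1)
        (hx.2.trans hy₂T) (by rw [hr]; linarith)
    calc (y₂ - y₁) * (T * y₁) ^ r = ∫ _ in y₁..y₂, (T * y₁) ^ r := by
          rw [intervalIntegral.integral_const, smul_eq_mul]
      _ ≤ ∫ y in y₁..y₂, y ^ r :=
          intervalIntegral.integral_mono_on hy.le intervalIntegrable_const hint h1
  have hTy : (T * y₁) ^ r = T ^ r * y₁ ^ r := Real.mul_rpow hTpos.le hy₁0.le
  have e1 : T ^ ((k + 1) / 2) * T ^ r = 1 := by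
    rw [← Real.rpow_add hTpos]
    have : (k + 1) / 2 + r = 0 := by rw [hr]; ring
    rw [this, Real.rpow_zero]
  have e2 : y₁ * y₁ ^ r = y₁ ^ ((1 - k) / 2) := by
    calc y₁ * y₁ ^ r = y₁ ^ (1 : ℝ) * y₁ ^ r := by rw [Real.rpow_one]
      _ = y₁ ^ (1 + r) := (Real.rpow_add hy₁0 1 r).symm
      _ = y₁ ^ ((1 - k) / 2) := by congr 1; rw [hr]; ring
  have hEq : (C₀ ^ (k - 1) * T ^ ((k + 1) / 2)) * ((y₂ - y₁) * (T ^ r * y₁ ^ r)) =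
      C₀ ^ (k - 1) * y₁ ^ ((1 - k) / 2) * (t - 1) := by
    rw [hy₂eq]
    have h3 : (C₀ ^ (k - 1) * T ^ ((k + 1) / 2)) * ((t * y₁ - y₁) * (T ^ r * y₁ ^ r)) =
        C₀ ^ (k - 1) * (T ^ ((k + 1) / 2) * T ^ r) * ((t - 1) * (y₁ * y₁ ^ r)) := by ring
    rw [h3, e1, e2]; ring
  calc (2 * Real.sinh ((1 / 2) * Real.log t)) ^ k ≤ (t - 1) ^ k := hLHS1
    _ ≤ C₀ ^ (k - 1) * y₁ ^ ((1 - k) / 2) * (t - 1) := hLHS2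
    _ = (C₀ ^ (k - 1) * T ^ ((k + 1) / 2)) * ((y₂ - y₁) * (T * y₁) ^ r) := by
        rw [hTy, hEq]
    _ ≤ (C₀ ^ (k - 1) * T ^ ((k + 1) / 2)) * ∫ y in y₁..y₂, y ^ r :=
        mul_le_mul_of_nonneg_left hlow (by positivity)
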